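/- Let $T_1, T_2, \ldots$ be a sequence of bounded operators on $\ell^2$. Then there exist integers $0 = r_1 < r_2 < \cdots$ such that for all $k, i \in \mathbb{N}$ with $k \ge i$, $\|(I - (Q_{k-1} + Q_k + Q_{k+1})) T_i Q_k\| \le 2^{-k}$, where $Q_0 = 0$ and $Q_k$ is the orthogonal projection of $\ell^2$ onto $\ell^2([r_k + 1, r_{k+1}])$. -/

import Mathlib

open scoped ENNReal
noncomputable section
namespace Paper

instance : Fact ((1:ℝ≥0∞) ≤ 2) := ⟨one_le_two⟩

section lpMaps
variable {E : ℕ → Type*} [∀ i, NormedAddCommGroup (E i)] [∀ i, NormedSpace ℂ (E i)]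

/-- Canonical coordinate projection `Q i` from the `ℓᵖ`-direct sum onto `E i`. -/
def lpProj (p : ℝ≥0∞) [Fact (1 ≤ p)] (i : ℕ) : lp E p →L[ℂ] E i :=
  LinearMap.mkContinuous
    { toFun := fun f => f i
      map_add' := fun f g => rfl
      map_smul' := fun c f => rfl }
    1 fun f => by
      have h1 : (1:ℝ≥0∞) ≤ p := Fact.out
      have hp0 : p ≠ 0 := by intro h; rw [h] at h1; simp at h1
      simp only [one_mul]
      exact lp.norm_apply_le_norm hp0 f i

/-- Canonical inclusion `J i` of `E i` into the `ℓᵖ`-direct sum. -/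
def lpIncl (p : ℝ≥0∞) [Fact (1 ≤ p)] (hp : p ≠ ⊤) (i : ℕ) : E i →L[ℂ] lp E p :=
  LinearMap.mkContinuous
    { toFun := fun a => lp.single p i a
      map_add' := fun a b => by
        apply lp.ext; funext j
        by_cases h : j = i
        · subst h
          simp [lp.single_apply_self, lp.coeFn_add]
        · simp [lp.single_apply_ne p i _ h, lp.coeFn_add]
      map_smul' := fun c a => lp.single_smul p i c a }
    1 fun a => by
      have h1 : (1:ℝ≥0∞) ≤ p := Fact.out
      have hp0 : p ≠ 0 := by intro h; rw [h] at h1; simp at h1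
      have hpt : 0 < p.toReal := ENNReal.toReal_pos hp0 hp
      have := lp.norm_single (E := E) (p := p) (lt_of_lt_of_le zero_lt_one h1) i a
      exact le_of_eq (by simpa using this)

end lpMaps

section Fredholm
variable {X Y : Type*} [NormedAddCommGroup X] [NormedSpace ℂ X]
  [NormedAddCommGroup Y] [NormedSpace ℂ Y]

/-- A bounded operator is Fredholm if its kernel is finite dimensional and its range has
finite codimension. -/
def IsFredholm (T : X →L[ℂ] Y) : Prop :=
  FiniteDimensional ℂ (LinearMap.ker (T : X →ₗ[ℂ] Y)) ∧ FiniteDimensional ℂ (Y ⧸ LinearMap.range (T : X →ₗ[ℂ] Y))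

/-- The Fredholm index `dim ker T - codim ran T`. -/
def fredholmIndex (T : X →L[ℂ] Y) : ℤ :=
  (Module.finrank ℂ (LinearMap.ker (T : X →ₗ[ℂ] Y)) : ℤ) - (Module.finrank ℂ (Y ⧸ LinearMap.range (T : X →ₗ[ℂ] Y)) : ℤ)

/-- The essential norm: the distance to the compact operators. -/
def essNorm (T : X →L[ℂ] Y) : ℝ :=
  ⨅ K : {K : X →L[ℂ] Y // IsCompactOperator ⇑K}, ‖T - (K : X →L[ℂ] Y)‖

end Fredholm

/-- The canonical projection of `ℓ²` onto the coordinates in `[r k, r (k+1))`. -/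
def blockProj (r : ℕ → ℕ) (k : ℕ) :
    lp (fun _ : ℕ => ℂ) 2 →L[ℂ] lp (fun _ : ℕ => ℂ) 2 :=
  ∑ i ∈ Finset.Ico (r k) (r (k+1)),
    (lpIncl (E := fun _ : ℕ => ℂ) 2 (by norm_num) i).comp (lpProj 2 i)


/-- `ℓ²(ℕ)`. -/
abbrev L2 := lp (fun _ : ℕ => ℂ) 2

/-- `ℓᵖ(ℕ)`. -/
abbrev Lp (p : ℝ≥0∞) := lp (fun _ : ℕ => ℂ) p

/-- The blocks `ℓ²([r k, r (k+1)))` as abstract finite dimensional Hilbert spaces. -/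
abbrev Eb (r : ℕ → ℕ) : ℕ → Type := fun k => EuclideanSpace ℂ (Fin (r (k+1) - r k))


/-! ### Auxiliary lemmas -/

/-- Truncation projection onto coordinates `< n`. -/
def Pp (n : ℕ) : L2 →L[ℂ] L2 :=
  ∑ i ∈ Finset.range n,
    (lpIncl (E := fun _ : ℕ => ℂ) 2 (by norm_num) i).comp (lpProj 2 i)

lemma Pp_apply (n : ℕ) (x : L2) (j : ℕ) :
    (Pp n x : ∀ _ : ℕ, ℂ) j = if j < n then (x : ∀ _ : ℕ, ℂ) j else 0 := by
  have : Pp n x = ∑ i ∈ Finset.range n, lp.single 2 i ((x : ∀ _ : ℕ, ℂ) i) := by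
    simp [Pp, ContinuousLinearMap.sum_apply]; rfl
  rw [this]
  simp only [lp.coeFn_sum, Finset.sum_apply, lp.single_apply, Finset.sum_dite_eq,
    Finset.mem_range, Finset.sum_pi_single]

lemma Pp_eq_sum_single (n : ℕ) (x : L2) :
    Pp n x = ∑ i ∈ Finset.range n, lp.single 2 i ((x : ∀ _ : ℕ, ℂ) i) := by
  simp [Pp, ContinuousLinearMap.sum_apply]; rfl
lemma blockProj_apply (r : ℕ → ℕ) (k : ℕ) (x : L2) (j : ℕ) :
    (blockProj r k x : ∀ _ : ℕ, ℂ) j =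
      if j ∈ Finset.Ico (r k) (r (k+1)) then (x : ∀ _ : ℕ, ℂ) j else 0 := by
  have : blockProj r k x
      = ∑ i ∈ Finset.Ico (r k) (r (k+1)), lp.single 2 i ((x : ∀ _ : ℕ, ℂ) i) := by
    simp [blockProj, ContinuousLinearMap.sum_apply]; rfl
  rw [this]
  simp only [lp.coeFn_sum, Finset.sum_apply, lp.single_apply, Finset.sum_dite_eq,
    Finset.sum_pi_single]

/-- Pointwise norm comparison gives norm comparison in `ℓ²`. -/
lemma pw_norm_le {x y : L2} (h : ∀ j, ‖(x : ∀ _ : ℕ, ℂ) j‖ ≤ ‖(y : ∀ _ : ℕ, ℂ) j‖) :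
    ‖x‖ ≤ ‖y‖ := by
  have hp : 0 < (2 : ℝ≥0∞).toReal := by norm_num
  refine lp.norm_le_of_forall_sum_le hp (norm_nonneg _) (fun s => ?_)
  refine le_trans (Finset.sum_le_sum (fun i _ => ?_)) (lp.sum_rpow_le_norm_rpow hp y s)
  exact Real.rpow_le_rpow (norm_nonneg _) (h i) (by norm_num)

lemma norm_Pp_apply_le (n : ℕ) (x : L2) : ‖Pp n x‖ ≤ ‖x‖ := by
  refine pw_norm_le fun j => ?_
  rw [Pp_apply]; split_ifs <;> simp

lemma norm_one_sub_Pp_apply_le (n : ℕ) (x : L2) : ‖(1 - Pp n) x‖ ≤ ‖x‖ := by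
  refine pw_norm_le fun j => ?_
  have : ((1 - Pp n) x : ∀ _ : ℕ, ℂ) j
      = (x : ∀ _ : ℕ, ℂ) j - (Pp n x : ∀ _ : ℕ, ℂ) j := by
    simp [ContinuousLinearMap.sub_apply, lp.coeFn_sub]
  rw [this, Pp_apply]; split_ifs <;> simp

lemma norm_Pp_sub_Pp_apply_le (m n : ℕ) (x : L2) : ‖(Pp m - Pp n) x‖ ≤ ‖x‖ := by
  refine pw_norm_le fun j => ?_
  have : ((Pp m - Pp n) x : ∀ _ : ℕ, ℂ) j
      = (Pp m x : ∀ _ : ℕ, ℂ) j - (Pp n x : ∀ _ : ℕ, ℂ) j := by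
    simp [ContinuousLinearMap.sub_apply, lp.coeFn_sub]
  rw [this, Pp_apply, Pp_apply]; split_ifs <;> simp

lemma norm_one_sub_Pp (n : ℕ) : ‖(1 : L2 →L[ℂ] L2) - Pp n‖ ≤ 1 := by
  refine ContinuousLinearMap.opNorm_le_bound _ zero_le_one (fun x => ?_)
  simpa using norm_one_sub_Pp_apply_le n x

lemma norm_Pp_sub_Pp (m n : ℕ) : ‖Pp m - Pp n‖ ≤ 1 := by
  refine ContinuousLinearMap.opNorm_le_bound _ zero_le_one (fun x => ?_)
  simpa using norm_Pp_sub_Pp_apply_le m n x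

lemma Pp_zero : Pp 0 = 0 := by
  simp [Pp]

/-- `blockProj r k = Pp (r (k+1)) - Pp (r k)` when `r k ≤ r (k+1)`. -/
lemma blockProj_eq (r : ℕ → ℕ) (k : ℕ) (h : r k ≤ r (k+1)) :
    blockProj r k = Pp (r (k+1)) - Pp (r k) := by
  refine ContinuousLinearMap.ext fun x => lp.ext (funext fun j => ?_)
  have h2 : ((Pp (r (k+1)) - Pp (r k)) x : ∀ _ : ℕ, ℂ) j
      = (Pp (r (k+1)) x : ∀ _ : ℕ, ℂ) j - (Pp (r k) x : ∀ _ : ℕ, ℂ) j := by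
    simp [ContinuousLinearMap.sub_apply, lp.coeFn_sub]
  rw [blockProj_apply, h2, Pp_apply, Pp_apply]
  simp only [Finset.mem_Ico]
  rcases Nat.lt_or_ge j (r k) with hj | hj
  · rw [if_neg (by omega), if_pos (by omega), if_pos hj]; ring
  · rcases Nat.lt_or_ge j (r (k+1)) with hj2 | hj2
    · rw [if_pos ⟨hj, hj2⟩, if_pos hj2, if_neg (by omega)]; ring
    · rw [if_neg (by omega), if_neg (by omega), if_neg (by omega)]; ring

lemma Pp_comp_Pp {m n : ℕ} (h : n ≤ m) : (Pp m).comp (Pp n) = Pp n := by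
  refine ContinuousLinearMap.ext fun x => lp.ext (funext fun j => ?_)
  rw [ContinuousLinearMap.comp_apply]
  simp only [Pp_apply]
  split_ifs <;> first | rfl | omega

lemma Pp_comp_Pp' {m n : ℕ} (h : n ≤ m) : (Pp n).comp (Pp m) = Pp n := by
  refine ContinuousLinearMap.ext fun x => lp.ext (funext fun j => ?_)
  rw [ContinuousLinearMap.comp_apply]
  simp only [Pp_apply]
  split_ifs <;> first | rfl | omega

lemma Pp_comp_one_sub_Pp {m n : ℕ} (h : n ≤ m) :
    (Pp m).comp (1 - Pp n) = Pp m - Pp n := by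
  rw [ContinuousLinearMap.comp_sub, ← ContinuousLinearMap.mul_def, mul_one, Pp_comp_Pp h]

lemma one_sub_Pp_comp_sub {a m n : ℕ} (hn : a ≤ n) (hm : a ≤ m) :
    (1 - Pp a).comp (Pp m - Pp n) = Pp m - Pp n := by
  rw [ContinuousLinearMap.sub_comp, ← ContinuousLinearMap.mul_def, one_mul,
    ContinuousLinearMap.comp_sub, Pp_comp_Pp' hm, Pp_comp_Pp' hn]
  abel
open Filter in
lemma tendsto_Pp (y : L2) : Tendsto (fun N => Pp N y) atTop (nhds y) := by
  have h := (lp.hasSum_single (E := fun _ : ℕ => ℂ) (p := 2) (by norm_num) y).tendsto_sum_nat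
  have : (fun N => ∑ i ∈ Finset.range N, lp.single 2 i ((y : ∀ _ : ℕ, ℂ) i))
      = fun N => Pp N y := by
    funext N; rw [Pp_eq_sum_single]
  rwa [this] at h

open Filter in
lemma tendsto_norm_sub_Pp (y : L2) :
    Tendsto (fun N => ‖(1 - Pp N) y‖) atTop (nhds 0) := by
  have h1 : Tendsto (fun N => y - Pp N y) atTop (nhds (y - y)) :=
    tendsto_const_nhds.sub (tendsto_Pp y)
  rw [sub_self] at h1
  have h2 := h1.norm
  rw [norm_zero] at h2
  simpa only [ContinuousLinearMap.sub_apply, ContinuousLinearMap.one_apply] using h2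

/-- The unit vector `e j`. -/
def ev (j : ℕ) : L2 := lp.single 2 j (1 : ℂ)

lemma Pp_n_x_eq (n : ℕ) (x : L2) :
    Pp n x = ∑ j ∈ Finset.range n, (x : ∀ _ : ℕ, ℂ) j • ev j := by
  rw [Pp_eq_sum_single]
  refine Finset.sum_congr rfl fun j _ => ?_
  rw [ev, ← lp.single_smul]
  norm_num

set_option maxHeartbeats 1000000 in
open Filter in
/-- Right tail: `‖(1 - Pp N) ∘ S ∘ Pp n‖ → 0`. -/
lemma tendsto_right_tail (S : L2 →L[ℂ] L2) (n : ℕ) :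
    Tendsto (fun N => ‖((1 : L2 →L[ℂ] L2) - Pp N).comp (S.comp (Pp n))‖) atTop (nhds 0) := by
  have key : ∀ N, ‖((1 : L2 →L[ℂ] L2) - Pp N).comp (S.comp (Pp n))‖
      ≤ ∑ j ∈ Finset.range n, ‖(1 - Pp N) (S (ev j))‖ := by
    intro N
    refine ContinuousLinearMap.opNorm_le_bound _
      (Finset.sum_nonneg fun _ _ => norm_nonneg _) (fun x => ?_)
    rw [ContinuousLinearMap.comp_apply, ContinuousLinearMap.comp_apply, Pp_n_x_eq, map_sum,
      map_sum, Finset.sum_mul]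
    refine (norm_sum_le _ _).trans (Finset.sum_le_sum fun j _ => ?_)
    rw [map_smul, map_smul, norm_smul]
    calc ‖(x : ∀ _ : ℕ, ℂ) j‖ * ‖(1 - Pp N) (S (ev j))‖
        ≤ ‖x‖ * ‖(1 - Pp N) (S (ev j))‖ := by
          gcongr; exact lp.norm_apply_le_norm (by norm_num) x j
      _ = ‖(1 - Pp N) (S (ev j))‖ * ‖x‖ := mul_comm _ _
  have lim : Tendsto (fun N => ∑ j ∈ Finset.range n, ‖(1 - Pp N) (S (ev j))‖)
      atTop (nhds 0) := by
    have : Tendsto (fun N => ∑ j ∈ Finset.range n, ‖(1 - Pp N) (S (ev j))‖)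
        atTop (nhds (∑ j ∈ Finset.range n, (0:ℝ))) :=
      tendsto_finset_sum _ fun j _ => tendsto_norm_sub_Pp (S (ev j))
    simpa only [Finset.sum_const_zero] using this
  refine squeeze_zero (fun N => norm_nonneg _) key lim
open scoped InnerProductSpace in
lemma Pp_symm (N : ℕ) (a b : L2) : ⟪Pp N a, b⟫_ℂ = ⟪a, Pp N b⟫_ℂ := by
  rw [Pp_eq_sum_single, Pp_eq_sum_single, sum_inner, inner_sum]
  refine Finset.sum_congr rfl fun j _ => ?_
  rw [lp.inner_single_left, lp.inner_single_right]

set_option maxHeartbeats 1000000 in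
open Filter in
/-- Left tail: `‖Pp n ∘ S ∘ (1 - Pp N)‖ → 0`. -/
lemma tendsto_left_tail (S : L2 →L[ℂ] L2) (n : ℕ) :
    Tendsto (fun N => ‖(Pp n).comp (S.comp ((1 : L2 →L[ℂ] L2) - Pp N))‖) atTop (nhds 0) := by
  classical
  -- Riesz representation of the coordinate functionals of `S`.
  set y : ℕ → L2 := fun j =>
    (InnerProductSpace.toDual ℂ L2).symm ((lpProj (E := fun _ : ℕ => ℂ) 2 j).comp S) with hy
  have hyrep : ∀ j (z : L2), @inner ℂ _ _ (y j) z = (S z : ∀ _ : ℕ, ℂ) j := fun j z =>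
    InnerProductSpace.toDual_symm_apply
  have key : ∀ N, ‖(Pp n).comp (S.comp ((1 : L2 →L[ℂ] L2) - Pp N))‖
      ≤ ∑ j ∈ Finset.range n, ‖(1 - Pp N) (y j)‖ := by
    intro N
    refine ContinuousLinearMap.opNorm_le_bound _
      (Finset.sum_nonneg fun _ _ => norm_nonneg _) (fun x => ?_)
    rw [ContinuousLinearMap.comp_apply, ContinuousLinearMap.comp_apply, Pp_eq_sum_single,
      Finset.sum_mul]
    refine (norm_sum_le _ _).trans (Finset.sum_le_sum fun j _ => ?_)
    have h1 : ‖lp.single (E := fun _ : ℕ => ℂ) 2 j ((S (((1 : L2 →L[ℂ] L2) - Pp N) x)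
        : ∀ _ : ℕ, ℂ) j)‖ = ‖(S (((1 : L2 →L[ℂ] L2) - Pp N) x) : ∀ _ : ℕ, ℂ) j‖ := by
      have := lp.norm_single (E := fun _ : ℕ => ℂ) (p := 2) (by norm_num)
        j ((S (((1 : L2 →L[ℂ] L2) - Pp N) x) : ∀ _ : ℕ, ℂ) j)
      simpa using this
    rw [h1, ← hyrep j]
    have h2 : @inner ℂ _ _ (y j) (((1 : L2 →L[ℂ] L2) - Pp N) x)
        = @inner ℂ _ _ ((1 - Pp N) (y j)) x := by
      simp only [ContinuousLinearMap.sub_apply, ContinuousLinearMap.one_apply,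
        inner_sub_left, inner_sub_right]
      rw [Pp_symm]
    rw [h2]
    exact norm_inner_le_norm _ _
  have lim : Tendsto (fun N => ∑ j ∈ Finset.range n, ‖(1 - Pp N) (y j)‖) atTop (nhds 0) := by
    have : Tendsto (fun N => ∑ j ∈ Finset.range n, ‖(1 - Pp N) (y j)‖)
        atTop (nhds (∑ j ∈ Finset.range n, (0:ℝ))) :=
      tendsto_finset_sum _ fun j _ => tendsto_norm_sub_Pp (y j)
    simpa only [Finset.sum_const_zero] using this
  exact squeeze_zero (fun N => norm_nonneg _) key lim
open Filter in
lemma exists_step (T : ℕ → (L2 →L[ℂ] L2)) (m a : ℕ) :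
    ∃ b, a < b ∧ ∀ i ≤ m + 1,
      ‖((1 : L2 →L[ℂ] L2) - Pp b).comp ((T i).comp (Pp a))‖ ≤ (1/2:ℝ)^(m+2) ∧
      ‖(Pp a).comp ((T i).comp ((1 : L2 →L[ℂ] L2) - Pp b))‖ ≤ (1/2:ℝ)^(m+2) := by
  have hε : (0:ℝ) < (1/2)^(m+2) := by positivity
  have h1 : ∀ᶠ b in atTop, ∀ i ∈ Finset.range (m+2),
      ‖((1 : L2 →L[ℂ] L2) - Pp b).comp ((T i).comp (Pp a))‖ ≤ (1/2:ℝ)^(m+2) ∧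
      ‖(Pp a).comp ((T i).comp ((1 : L2 →L[ℂ] L2) - Pp b))‖ ≤ (1/2:ℝ)^(m+2) := by
    rw [Filter.eventually_all_finset]
    intro i _
    exact ((tendsto_right_tail (T i) a).eventually_le_const hε).and
      ((tendsto_left_tail (T i) a).eventually_le_const hε)
  obtain ⟨b, hb1, hb2⟩ := (h1.and (Filter.eventually_gt_atTop a)).exists
  exact ⟨b, hb2, fun i hi => hb1 i (Finset.mem_range.mpr (by omega))⟩
set_option maxHeartbeats 2000000 in
theorem statement_3 (T : ℕ → (L2 →L[ℂ] L2)) :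
    ∃ r : ℕ → ℕ, r 0 = 0 ∧ StrictMono r ∧
      ∀ k i : ℕ, i ≤ k →
        ‖(1 - ((if k = 0 then 0 else blockProj r (k - 1)) + blockProj r k +
            blockProj r (k + 1))).comp ((T i).comp (blockProj r k))‖ ≤ (1 / 2 : ℝ) ^ k := by
  classical
  choose f hlt hbound using exists_step T
  let r : ℕ → ℕ := fun n => Nat.rec 0 (fun m prev => f m prev) n
  have hrsucc : ∀ m, r (m+1) = f m (r m) := fun m => rfl
  have hmono : StrictMono r := strictMono_nat_of_lt_succ fun m => by
    rw [hrsucc]; exact hlt m (r m)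
  have hmle : Monotone r := hmono.monotone
  refine ⟨r, rfl, hmono, ?_⟩
  intro k i hik
  -- rewrite the block projections as truncation differences
  have hQ : (if k = 0 then 0 else blockProj r (k-1)) + blockProj r k + blockProj r (k+1)
      = Pp (r (k+2)) - Pp (r (k-1)) := by
    rcases k with _ | k'
    · rw [if_pos rfl]
      show (0:L2 →L[ℂ] L2) + blockProj r 0 + blockProj r 1 = Pp (r 2) - Pp (r 0)
      rw [blockProj_eq r 0 (hmle (Nat.le_succ 0)), blockProj_eq r 1 (hmle (Nat.le_succ 1))]
      show (0:L2 →L[ℂ] L2) + (Pp (r 1) - Pp (r 0)) + (Pp (r 2) - Pp (r 1))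
        = Pp (r 2) - Pp (r 0)
      abel
    · rw [if_neg (by omega)]
      show blockProj r k' + blockProj r (k'+1) + blockProj r (k'+2) = Pp (r (k'+3)) - Pp (r k')
      rw [blockProj_eq r k' (hmle (Nat.le_succ k')), blockProj_eq r (k'+1) (hmle (Nat.le_succ (k'+1))),
        blockProj_eq r (k'+2) (hmle (Nat.le_succ (k'+2)))]
      show (Pp (r (k'+1)) - Pp (r k')) + (Pp (r (k'+2)) - Pp (r (k'+1)))
        + (Pp (r (k'+3)) - Pp (r (k'+2))) = Pp (r (k'+3)) - Pp (r k')
      abel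
  rw [hQ, blockProj_eq r k (hmle (Nat.le_succ k))]
  have hsplit : (1 : L2 →L[ℂ] L2) - (Pp (r (k+2)) - Pp (r (k-1)))
      = ((1 : L2 →L[ℂ] L2) - Pp (r (k+2))) + Pp (r (k-1)) := by abel
  rw [hsplit, ContinuousLinearMap.add_comp]
  have hterm1 : ((1 : L2 →L[ℂ] L2) - Pp (r (k+2))).comp
        ((T i).comp (Pp (r (k+1)) - Pp (r k)))
      = (((1 : L2 →L[ℂ] L2) - Pp (r (k+2))).comp ((T i).comp (Pp (r (k+1))))).comp
        ((1 : L2 →L[ℂ] L2) - Pp (r k)) := by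
    rw [ContinuousLinearMap.comp_assoc, ContinuousLinearMap.comp_assoc,
      Pp_comp_one_sub_Pp (hmle (Nat.le_succ k))]
  have hterm2 : (Pp (r (k-1))).comp ((T i).comp (Pp (r (k+1)) - Pp (r k)))
      = ((Pp (r (k-1))).comp ((T i).comp ((1 : L2 →L[ℂ] L2) - Pp (r k)))).comp
        (Pp (r (k+1)) - Pp (r k)) := by
    rw [ContinuousLinearMap.comp_assoc, ContinuousLinearMap.comp_assoc,
      one_sub_Pp_comp_sub le_rfl (hmle (Nat.le_succ k))]
  rw [hterm1, hterm2]
  have hb1 : ‖(((1 : L2 →L[ℂ] L2) - Pp (r (k+2))).comp ((T i).comp (Pp (r (k+1))))).comp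
        ((1 : L2 →L[ℂ] L2) - Pp (r k))‖ ≤ (1/2:ℝ)^(k+3) := by
    have h1 : ‖((1 : L2 →L[ℂ] L2) - Pp (r (k+2))).comp ((T i).comp (Pp (r (k+1))))‖
        ≤ (1/2:ℝ)^(k+3) := by
      have := (hbound (k+1) (r (k+1)) i (by omega)).1
      rw [← hrsucc (k+1)] at this
      exact this
    calc ‖_‖ ≤ ‖((1 : L2 →L[ℂ] L2) - Pp (r (k+2))).comp ((T i).comp (Pp (r (k+1))))‖ *
          ‖(1 : L2 →L[ℂ] L2) - Pp (r k)‖ := ContinuousLinearMap.opNorm_comp_le _ _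
      _ ≤ (1/2:ℝ)^(k+3) * 1 :=
          mul_le_mul h1 (norm_one_sub_Pp _) (norm_nonneg _) (by positivity)
      _ = (1/2:ℝ)^(k+3) := mul_one _
  have hb2 : ‖((Pp (r (k-1))).comp ((T i).comp ((1 : L2 →L[ℂ] L2) - Pp (r k)))).comp
        (Pp (r (k+1)) - Pp (r k))‖ ≤ (1/2:ℝ)^(k+1) := by
    rcases k with _ | k'
    · have hr0 : Pp (r 0) = 0 := by
        show Pp 0 = 0; exact Pp_zero
      show ‖((Pp (r 0)).comp _).comp _‖ ≤ _
      rw [hr0, ContinuousLinearMap.zero_comp, ContinuousLinearMap.zero_comp, norm_zero]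
      positivity
    · have h1 : ‖(Pp (r k')).comp ((T i).comp ((1 : L2 →L[ℂ] L2) - Pp (r (k'+1))))‖
          ≤ (1/2:ℝ)^(k'+2) := by
        have := (hbound k' (r k') i (by omega)).2
        rw [← hrsucc k'] at this
        exact this
      show ‖((Pp (r k')).comp ((T i).comp ((1 : L2 →L[ℂ] L2) - Pp (r (k'+1))))).comp
        (Pp (r (k'+2)) - Pp (r (k'+1)))‖ ≤ (1/2:ℝ)^(k'+2)
      calc ‖_‖ ≤ ‖(Pp (r k')).comp ((T i).comp ((1 : L2 →L[ℂ] L2) - Pp (r (k'+1))))‖ *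
            ‖Pp (r (k'+2)) - Pp (r (k'+1))‖ := ContinuousLinearMap.opNorm_comp_le _ _
        _ ≤ (1/2:ℝ)^(k'+2) * 1 :=
            mul_le_mul h1 (norm_Pp_sub_Pp _ _) (norm_nonneg _) (by positivity)
        _ = (1/2:ℝ)^(k'+2) := mul_one _
  calc ‖_ + _‖ ≤ (1/2:ℝ)^(k+3) + (1/2:ℝ)^(k+1) :=
        (norm_add_le _ _).trans (add_le_add hb1 hb2)
    _ ≤ (1/2:ℝ)^k := by
        have h0 : (0:ℝ) ≤ (1/2:ℝ)^k := by positivity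
        rw [pow_add, pow_add]
        nlinarith
end Paper
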